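/- arXiv:1308.2091 — 3 statements merged into one kernel-verified Lean document; each statement's English description precedes it below -/
import Mathlib

section
/- The supremum of |D(p)|/H(p)^2 over all integer quadratic polynomials p equals 5, and it is attained by the polynomial Q(x² + x − 1) for any positive integer Q, i.e. for p(x) = Qx² + Qx − Q one has |D(p)| = 5Q² = 5·H(p)². -/
theorem stmt_1 :
    (∀ a b c : ℤ, a ≠ 0 →
      ((|b ^ 2 - 4 * a * c| : ℤ) : ℝ) ≤ 5 * ((max |a| (max |b| |c|) : ℤ) : ℝ) ^ 2) ∧
    (∀ Q : ℤ, 0 < Q →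
      |Q ^ 2 - 4 * Q * (-Q)| = 5 * Q ^ 2 ∧ max |Q| (max |Q| |(-Q)|) = Q) := by
  constructor
  · intro a b c _
    have key : |b ^ 2 - 4 * a * c| ≤ 5 * (max |a| (max |b| |c|)) ^ 2 := by
      set H := max |a| (max |b| |c|) with hH
      have ha : |a| ≤ H := le_max_left _ _
      have hb : |b| ≤ H := le_trans (le_max_left _ _) (le_max_right _ _)
      have hc : |c| ≤ H := le_trans (le_max_right _ _) (le_max_right _ _)
      have hH0 : 0 ≤ H := le_trans (abs_nonneg a) ha
      have h1 : |b ^ 2 - 4 * a * c| ≤ |b| ^ 2 + 4 * (|a| * |c|) := by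
        calc |b ^ 2 - 4 * a * c| ≤ |b ^ 2| + |4 * a * c| := abs_sub _ _
        _ = |b| ^ 2 + 4 * (|a| * |c|) := by
            rw [abs_pow]
            rw [show (4 : ℤ) * a * c = 4 * (a * c) by ring, abs_mul, abs_mul]
            norm_num
      have h2 : |b| ^ 2 ≤ H ^ 2 := pow_le_pow_left₀ (abs_nonneg b) hb 2
      have h3 : |a| * |c| ≤ H * H :=
        mul_le_mul ha hc (abs_nonneg c) hH0
      nlinarith
    calc ((|b ^ 2 - 4 * a * c| : ℤ) : ℝ) ≤ ((5 * (max |a| (max |b| |c|)) ^ 2 : ℤ) : ℝ) := by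
          exact_mod_cast key
      _ = 5 * ((max |a| (max |b| |c|) : ℤ) : ℝ) ^ 2 := by push_cast; ring
  · intro Q hQ
    constructor
    · rw [show Q ^ 2 - 4 * Q * (-Q) = 5 * Q ^ 2 by ring, abs_of_nonneg (by positivity)]
    · simp [abs_of_pos hQ]
end

section
/- Let α = a/q + θ/q² with gcd(a,q) = 1, q ≥ 1 an integer, and |θ| ≤ 1. Then for any real β, any U > 0, and any integer P ≥ 1, the sum over x from 1 to P of min(U, 1/‖αx + β‖) is at most 6(P/q + 1)(U + q·ln q), where ‖t‖ denotes the distance from t to the nearest integer. -/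
open Finset

noncomputable def dzz (t : ℝ) : ℝ := min (Int.fract t) (1 - Int.fract t)
lemma dzz_eq_abs (t : ℝ) : dzz t = |t - round t| := (abs_sub_round_eq_min t).symm
lemma dzz_nonneg (t : ℝ) : 0 ≤ dzz t := by rw [dzz_eq_abs]; exact abs_nonneg _
lemma dzz_le_half (t : ℝ) : dzz t ≤ 1/2 := by rw [dzz_eq_abs]; exact abs_sub_round t
lemma dzz_int_add (k : ℤ) (t : ℝ) : dzz ((k:ℝ) + t) = dzz t := by
  unfold dzz; rw [Int.fract_intCast_add]
lemma dzz_le (t : ℝ) (k : ℤ) : dzz t ≤ |t - k| := by rw [dzz_eq_abs]; exact round_le t k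
lemma dzz_lipschitz (s t : ℝ) : dzz s - |s - t| ≤ dzz t := by
  have h1 : dzz s ≤ |s - round t| := dzz_le s (round t)
  have h2 : |s - round t| ≤ |s - t| + |t - round t| := by
    calc |s - round t| = |(s - t) + (t - round t)| := by ring_nf
    _ ≤ _ := abs_add_le _ _
  rw [dzz_eq_abs t]; linarith


lemma harm2 (Q : ℕ) : ∑ j ∈ Finset.Ico 2 (Q+1), ((j:ℝ))⁻¹ ≤ Real.log Q := by
  induction Q with
  | zero => simp
  | succ n ih =>
    rcases Nat.eq_zero_or_pos n with h0 | hn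
    · subst h0; norm_num
    · rw [← Finset.sum_Ico_consecutive _ (by omega : 2 ≤ n+1) (by omega : n+1 ≤ n+2),
        Nat.Ico_succ_singleton, Finset.sum_singleton]
      have hn' : (0:ℝ) < n := by positivity
      have key : ((n:ℝ)+1)⁻¹ ≤ Real.log ((n:ℝ)+1) - Real.log n := by
        have h := Real.log_le_sub_one_of_pos (show (0:ℝ) < (n:ℝ)/((n:ℝ)+1) by positivity)
        rw [Real.log_div (ne_of_gt hn') (by positivity)] at h
        have h2 : (n:ℝ)/((n:ℝ)+1) - 1 = -(((n:ℝ)+1)⁻¹) := by field_simp; ring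
        linarith [h2 ▸ h]
      have hcast : ((n+1 : ℕ):ℝ) = (n:ℝ)+1 := by push_cast; ring
      rw [hcast]
      calc _ ≤ Real.log n + (Real.log ((n:ℝ)+1) - Real.log n) := by linarith
      _ = Real.log ((n:ℝ)+1) := by ring

lemma harm1 (Q : ℕ) : ∑ j ∈ Finset.Ico 1 Q, ((j:ℝ))⁻¹ ≤ 1 + Real.log Q := by
  rcases le_or_gt Q 1 with h | h
  · interval_cases Q <;> simp
  · rw [← Finset.sum_Ico_consecutive _ (by omega : 1 ≤ 2) (by omega : 2 ≤ Q)]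
    have h1 : ∑ j ∈ Finset.Ico (1:ℕ) 2, ((j:ℝ))⁻¹ = 1 := by norm_num
    have h2 : ∑ j ∈ Finset.Ico 2 Q, ((j:ℝ))⁻¹ ≤ ∑ j ∈ Finset.Ico 2 (Q+1), ((j:ℝ))⁻¹ :=
      Finset.sum_le_sum_of_subset_of_nonneg (Finset.Ico_subset_Ico le_rfl (by omega))
        (by intros i _ _; positivity)
    have h3 := harm2 Q
    rw [h1]; linarith

set_option maxHeartbeats 1000000 in
lemma block_bound (a q : ℤ) (hq : 1 ≤ q) (hgcd : Int.gcd a q = 1)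
    (θ : ℝ) (hθ : |θ| ≤ 1) (U : ℝ) (hU : 0 < U) (γ : ℝ) :
    ∑ y ∈ Finset.Ioc (0:ℤ) q, min U (dzz (γ + (a:ℝ)*y/(q:ℝ) + θ*y/(q:ℝ)^2))⁻¹
      ≤ 6 * (U + (q:ℝ) * Real.log q) := by
  classical
  have hq0 : (0:ℝ) < q := by exact_mod_cast hq
  set g : ℤ → ℝ := fun r =>
    if (1:ℝ)/q < dzz (γ + (r:ℝ)/q) then min U (dzz (γ + (r:ℝ)/q) - 1/q)⁻¹ else U with hg
  have g_nonneg : ∀ r, 0 ≤ g r := by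
    intro r; rw [hg]; dsimp only
    split_ifs with h
    · refine le_min hU.le (inv_nonneg.2 (by linarith))
    · exact hU.le
  have g_le_U : ∀ r, g r ≤ U := by
    intro r; rw [hg]; dsimp only
    split_ifs with h
    · exact min_le_left _ _
    · exact le_rfl
  -- step 1 : pointwise bound
  have step1 : ∀ y ∈ Finset.Ioc (0:ℤ) q,
      min U (dzz (γ + (a:ℝ)*y/(q:ℝ) + θ*y/(q:ℝ)^2))⁻¹ ≤ g ((a*y) % q) := by
    intro y hy
    rw [Finset.mem_Ioc] at hy
    set r : ℤ := (a*y) % q with hr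
    set k : ℤ := (a*y) / q with hk
    have hdecomp : (a:ℝ)*y/(q:ℝ) = (k:ℝ) + (r:ℝ)/q := by
      have h := Int.mul_ediv_add_emod (a*y) q
      have : ((a*y : ℤ):ℝ) = (q:ℝ)*(k:ℝ) + (r:ℝ) := by exact_mod_cast h.symm
      push_cast at this ⊢
      field_simp
      linarith
    set δ : ℝ := θ*y/(q:ℝ)^2 with hδ
    have hδabs : |δ| ≤ 1/q := by
      have hy0 : (0:ℝ) < y := by exact_mod_cast hy.1
      have hyq : (y:ℝ) ≤ q := by exact_mod_cast hy.2
      have : |δ| = |θ| * (y:ℝ) / (q:ℝ)^2 := by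
        rw [hδ, abs_div, abs_mul, abs_of_pos hy0, abs_of_pos (by positivity : (0:ℝ) < (q:ℝ)^2)]
      rw [this]
      rw [div_le_div_iff₀ (by positivity) hq0]
      have h1 : |θ| * (y:ℝ) ≤ 1 * (q:ℝ) := by
        apply mul_le_mul hθ hyq hy0.le zero_le_one
      nlinarith [sq_nonneg ((q:ℝ))]
    have hteq : γ + (a:ℝ)*y/(q:ℝ) + δ = (k:ℝ) + (γ + (r:ℝ)/q + δ) := by
      rw [hdecomp]; ring
    rw [hteq, dzz_int_add]
    by_cases hcase : (1:ℝ)/q < dzz (γ + (r:ℝ)/q)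
    · have hlip := dzz_lipschitz (γ + (r:ℝ)/q) (γ + (r:ℝ)/q + δ)
      have habs : |γ + (r:ℝ)/q - (γ + (r:ℝ)/q + δ)| = |δ| := by
        rw [show γ + (r:ℝ)/q - (γ + (r:ℝ)/q + δ) = -δ by ring, abs_neg]
      rw [habs] at hlip
      have hpos : 0 < dzz (γ + (r:ℝ)/q) - 1/q := by linarith
      have hge : dzz (γ + (r:ℝ)/q) - 1/q ≤ dzz (γ + (r:ℝ)/q + δ) := by linarith
      have : (dzz (γ + (r:ℝ)/q + δ))⁻¹ ≤ (dzz (γ + (r:ℝ)/q) - 1/q)⁻¹ :=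
        inv_anti₀ hpos hge
      rw [hg]; dsimp only; rw [if_pos hcase]
      exact min_le_min le_rfl this
    · rw [hg]; dsimp only; rw [if_neg hcase]
      exact min_le_left _ _
  
  -- step 2: sum over y ≤ sum of g over residues
  have hmod_mem : ∀ y : ℤ, (a*y) % q ∈ Finset.Ico (0:ℤ) q := by
    intro y
    rw [Finset.mem_Ico]
    exact ⟨Int.emod_nonneg _ (by omega), Int.emod_lt_of_pos _ (by omega)⟩
  have hinj : Set.InjOn (fun y => (a*y) % q) (Finset.Ioc (0:ℤ) q) := by
    intro y1 h1 y2 h2 h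
    simp only [Finset.coe_Ioc, Set.mem_Ioc] at h1 h2
    have hmodeq : a*y1 ≡ a*y2 [ZMOD q] := h
    have hdvd : q ∣ a*(y2 - y1) := by
      have := Int.ModEq.dvd hmodeq
      rw [show a*y2 - a*y1 = a*(y2-y1) by ring] at this
      exact this
    have hc : IsCoprime (q:ℤ) a := by
      rw [Int.isCoprime_iff_gcd_eq_one, Int.gcd_comm]; exact hgcd
    have hdvd2 : q ∣ (y2 - y1) := hc.dvd_of_dvd_mul_left hdvd
    obtain ⟨c, hc2⟩ := hdvd2
    have hb1 : -q < y2 - y1 := by omega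
    have hb2 : y2 - y1 < q := by omega
    rw [hc2] at hb1 hb2
    have hcz : c = 0 := by
      by_contra hne
      rcases lt_or_gt_of_ne hne with hlt | hgt
      · nlinarith
      · nlinarith
    simp [hcz] at hc2
    omega
  have step2 : ∑ y ∈ Finset.Ioc (0:ℤ) q, min U (dzz (γ + (a:ℝ)*y/(q:ℝ) + θ*y/(q:ℝ)^2))⁻¹
      ≤ ∑ r ∈ Finset.Ico (0:ℤ) q, g r := by
    calc ∑ y ∈ Finset.Ioc (0:ℤ) q, min U (dzz (γ + (a:ℝ)*y/(q:ℝ) + θ*y/(q:ℝ)^2))⁻¹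
        ≤ ∑ y ∈ Finset.Ioc (0:ℤ) q, g ((a*y) % q) := Finset.sum_le_sum step1
      _ = ∑ r ∈ (Finset.Ioc (0:ℤ) q).image (fun y => (a*y) % q), g r :=
          (Finset.sum_image (fun x hx y hy h => hinj (by simpa using hx) (by simpa using hy) h)).symm
      _ ≤ ∑ r ∈ Finset.Ico (0:ℤ) q, g r := by
          apply Finset.sum_le_sum_of_subset_of_nonneg
          · intro r hr
            rw [Finset.mem_image] at hr
            obtain ⟨y, _, rfl⟩ := hr
            exact hmod_mem y
          · intro i _ _; exact g_nonneg i
  -- step 3 : fiberwise decomposition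
  set Q : ℕ := q.toNat with hQ
  have hQq : (Q:ℝ) = (q:ℝ) := by rw [hQ]; exact_mod_cast congrArg Int.cast (Int.toNat_of_nonneg (by omega))
  have hQ1 : 1 ≤ Q := by omega
  set m : ℤ → ℕ := fun r => ⌊(q:ℝ) * dzz (γ + (r:ℝ)/q)⌋₊ with hm
  have hmaps : ∀ r ∈ Finset.Ico (0:ℤ) q, m r ∈ Finset.range (Q+1) := by
    intro r _
    rw [Finset.mem_range, Nat.lt_succ_iff, hm]
    have h1 : (q:ℝ) * dzz (γ + (r:ℝ)/q) ≤ (Q:ℝ) := by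
      rw [hQq]
      nlinarith [dzz_le_half (γ + (r:ℝ)/q), dzz_nonneg (γ + (r:ℝ)/q)]
    calc ⌊(q:ℝ) * dzz (γ + (r:ℝ)/q)⌋₊ ≤ ⌊(Q:ℝ)⌋₊ := Nat.floor_le_floor h1
      _ = Q := Nat.floor_natCast Q
  have step3 : ∑ r ∈ Finset.Ico (0:ℤ) q, g r
      = ∑ n ∈ Finset.range (Q+1), ∑ r ∈ (Finset.Ico (0:ℤ) q).filter (fun r => m r = n), g r :=
    (Finset.sum_fiberwise_of_maps_to hmaps g).symm
  
  -- step 4 : each fiber has at most 2 elements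
  set e : ℤ → ℝ := fun r => γ + (r:ℝ)/q - round (γ + (r:ℝ)/q) with he
  have card_fiber : ∀ n : ℕ, ((Finset.Ico (0:ℤ) q).filter (fun r => m r = n)).card ≤ 2 := by
    intro n
    have : ((Finset.Ico (0:ℤ) q).filter (fun r => m r = n)).card
        ≤ (Finset.univ : Finset Bool).card := by
      apply Finset.card_le_card_of_injOn (fun r => decide (0 ≤ e r))
      · intro r _; exact Finset.mem_univ _
      · intro r1 hr1 r2 hr2 hb
        simp only [Finset.coe_filter, Set.mem_setOf_eq, Finset.mem_Ico] at hr1 hr2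
        obtain ⟨⟨hr1l, hr1u⟩, hm1⟩ := hr1
        obtain ⟨⟨hr2l, hr2u⟩, hm2⟩ := hr2
        have hd1 : dzz (γ + (r1:ℝ)/q) = |e r1| := dzz_eq_abs _
        have hd2 : dzz (γ + (r2:ℝ)/q) = |e r2| := dzz_eq_abs _
        have hfl1 : (n:ℝ) ≤ (q:ℝ) * |e r1| ∧ (q:ℝ) * |e r1| < n+1 := by
          rw [hm] at hm1; dsimp only at hm1; rw [hd1] at hm1
          have h0 : (0:ℝ) ≤ (q:ℝ) * |e r1| := by positivity
          constructor
          · exact_mod_cast (Nat.le_floor_iff h0).1 hm1.ge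
          · have := Nat.lt_floor_add_one ((q:ℝ) * |e r1|)
            rw [hm1] at this; exact_mod_cast this
        have hfl2 : (n:ℝ) ≤ (q:ℝ) * |e r2| ∧ (q:ℝ) * |e r2| < n+1 := by
          rw [hm] at hm2; dsimp only at hm2; rw [hd2] at hm2
          have h0 : (0:ℝ) ≤ (q:ℝ) * |e r2| := by positivity
          constructor
          · exact_mod_cast (Nat.le_floor_iff h0).1 hm2.ge
          · have := Nat.lt_floor_add_one ((q:ℝ) * |e r2|)
            rw [hm2] at this; exact_mod_cast this
        have hbb : (0 ≤ e r1) ↔ (0 ≤ e r2) := by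
          constructor <;> intro h <;> by_contra h2 <;> simp [h, h2] at hb
        have hsame : |e r1 - e r2| * q < 1 := by
          rcases le_or_gt 0 (e r1) with hs | hs
          · have hs2 : 0 ≤ e r2 := hbb.1 hs
            rw [abs_of_nonneg hs] at hfl1
            rw [abs_of_nonneg hs2] at hfl2
            rcases abs_cases (e r1 - e r2) with ⟨habs, _⟩ | ⟨habs, _⟩ <;> rw [habs] <;> nlinarith
          · have hs2 : e r2 < 0 := by
              by_contra h2; push_neg at h2; exact absurd (hbb.2 h2) (not_le.2 hs)
            rw [abs_of_neg hs] at hfl1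
            rw [abs_of_neg hs2] at hfl2
            rcases abs_cases (e r1 - e r2) with ⟨habs, _⟩ | ⟨habs, _⟩ <;> rw [habs] <;> nlinarith
        -- e r1 - e r2 = (r1 - r2)/q - (k1 - k2)
        set k1 : ℤ := round (γ + (r1:ℝ)/q)
        set k2 : ℤ := round (γ + (r2:ℝ)/q)
        have hqne : (q:ℝ) ≠ 0 := ne_of_gt hq0
        have hdiff : (e r1 - e r2) * q = ((r1 - r2 - q*(k1 - k2) : ℤ) : ℝ) := by
          have he12 : e r1 - e r2 = ((r1:ℝ) - r2)/q - ((k1:ℝ) - k2) := by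
            rw [he]; dsimp only; ring
          rw [he12, sub_mul, div_mul_cancel₀ _ hqne]
          push_cast; ring
        have habs1 : |((r1 - r2 - q*(k1 - k2) : ℤ) : ℝ)| < 1 := by
          rw [← hdiff, abs_mul, abs_of_pos hq0]; exact hsame
        have hz : r1 - r2 - q*(k1 - k2) = 0 := by
          have h1 : |r1 - r2 - q*(k1 - k2)| < 1 := by exact_mod_cast habs1
          exact Int.abs_lt_one_iff.1 h1
        have hqk : r1 - r2 = q * (k1 - k2) := by linarith [hz]
        have hb1 : -q < r1 - r2 := by omega
        have hb2 : r1 - r2 < q := by omega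
        rw [hqk] at hb1 hb2
        have hkz : k1 - k2 = 0 := by
          by_contra hne
          rcases lt_or_gt_of_ne hne with hlt | hgt
          · nlinarith
          · nlinarith
        rw [hkz, mul_zero] at hqk
        omega
    simpa using this
  
  -- step 5 : per-fiber value bound
  set bnd : ℕ → ℝ := fun n => if n ≤ 1 then U else (q:ℝ)/((n:ℝ)-1) with hbnd
  have bnd_nonneg : ∀ n, 0 ≤ bnd n := by
    intro n; rw [hbnd]; dsimp only
    split_ifs with h
    · exact hU.le
    · push_neg at h
      have h1 : (1:ℝ) < (n:ℝ) := by exact_mod_cast h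
      have h2 : (0:ℝ) < (n:ℝ) - 1 := by linarith
      positivity
  have g_le_bnd : ∀ n : ℕ, ∀ r ∈ (Finset.Ico (0:ℤ) q).filter (fun r => m r = n), g r ≤ bnd n := by
    intro n r hr
    rw [Finset.mem_filter] at hr
    obtain ⟨_, hmr⟩ := hr
    rw [hbnd]; dsimp only
    split_ifs with h
    · exact g_le_U r
    · push_neg at h
      have h2 : (2:ℕ) ≤ n := h
      have hdz : (n:ℝ)/q ≤ dzz (γ + (r:ℝ)/q) := by
        have h0 : (0:ℝ) ≤ (q:ℝ) * dzz (γ + (r:ℝ)/q) := mul_nonneg hq0.le (dzz_nonneg _)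
        have hnle : n ≤ m r := hmr.ge
        rw [hm] at hnle; dsimp only at hnle
        have hle : (n:ℝ) ≤ (q:ℝ) * dzz (γ + (r:ℝ)/q) := (Nat.le_floor_iff h0).1 hnle
        rw [div_le_iff₀ hq0, mul_comm]
        linarith
      have hn2 : (2:ℝ) ≤ (n:ℝ) := by exact_mod_cast h2
      have hgt : (1:ℝ)/q < dzz (γ + (r:ℝ)/q) := by
        have h5 : (1:ℝ)/q < (n:ℝ)/q := by gcongr; linarith
        linarith
      rw [hg]; dsimp only; rw [if_pos hgt]
      have hn1 : (0:ℝ) < (n:ℝ) - 1 := by linarith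
      have hpos : (0:ℝ) < ((n:ℝ)-1)/q := by positivity
      have hle : ((n:ℝ)-1)/q ≤ dzz (γ + (r:ℝ)/q) - 1/q := by
        have : ((n:ℝ)-1)/q = (n:ℝ)/q - 1/q := by ring
        linarith [hdz]
      calc min U (dzz (γ + (r:ℝ)/q) - 1/q)⁻¹ ≤ (dzz (γ + (r:ℝ)/q) - 1/q)⁻¹ := min_le_right _ _
        _ ≤ (((n:ℝ)-1)/q)⁻¹ := inv_anti₀ hpos hle
        _ = (q:ℝ)/((n:ℝ)-1) := by rw [inv_div]
  have step5 : ∀ n : ℕ, ∑ r ∈ (Finset.Ico (0:ℤ) q).filter (fun r => m r = n), g r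
      ≤ 2 * bnd n := by
    intro n
    calc ∑ r ∈ (Finset.Ico (0:ℤ) q).filter (fun r => m r = n), g r
        ≤ ((Finset.Ico (0:ℤ) q).filter (fun r => m r = n)).card • bnd n :=
          Finset.sum_le_card_nsmul _ _ _ (g_le_bnd n)
      _ = (((Finset.Ico (0:ℤ) q).filter (fun r => m r = n)).card : ℝ) * bnd n := by
          rw [nsmul_eq_mul]
      _ ≤ 2 * bnd n := by
          apply mul_le_mul_of_nonneg_right _ (bnd_nonneg n)
          exact_mod_cast card_fiber n
  -- step 6 : sum the bnd
  set SQ : ℝ := ∑ j ∈ Finset.Ico (1:ℕ) Q, ((j:ℝ))⁻¹ with hSQ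
  have step6 : ∑ n ∈ Finset.range (Q+1), 2 * bnd n ≤ 4*U + 2*((q:ℝ) * SQ) := by
    rw [Finset.range_eq_Ico, ← Finset.sum_Ico_consecutive _ (by omega : (0:ℕ) ≤ 2) (by omega : 2 ≤ Q+1)]
    have h01 : ∑ n ∈ Finset.Ico (0:ℕ) 2, 2 * bnd n = 4*U := by
      rw [show Finset.Ico (0:ℕ) 2 = {0, 1} from rfl]
      rw [Finset.sum_insert (by decide), Finset.sum_singleton, hbnd]
      norm_num
      ring
    have h2 : ∑ n ∈ Finset.Ico (2:ℕ) (Q+1), 2 * bnd n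
        = ∑ j ∈ Finset.Ico (1:ℕ) Q, 2 * ((q:ℝ) * ((j:ℝ))⁻¹) := by
      have hmap : Finset.Ico (2:ℕ) (Q+1) = (Finset.Ico (1:ℕ) Q).map (addLeftEmbedding 1) := by
        rw [Finset.map_add_left_Ico]; congr 1; omega
      rw [hmap, Finset.sum_map]
      apply Finset.sum_congr rfl
      intro j hj
      rw [Finset.mem_Ico] at hj
      simp only [addLeftEmbedding_apply]
      rw [hbnd]; dsimp only
      rw [if_neg (by omega)]
      have : ((1+j : ℕ):ℝ) - 1 = (j:ℝ) := by push_cast; ring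
      rw [this, div_eq_mul_inv]
    rw [h01, h2, hSQ, Finset.mul_sum, Finset.mul_sum]
  -- final arithmetic
  have final : 4*U + 2*((q:ℝ) * SQ) ≤ 6 * (U + (q:ℝ) * Real.log q) := by
    by_cases hQone : Q = 1
    · have hq1 : q = 1 := by omega
      have hS0 : SQ = 0 := by rw [hSQ, hQone]; simp
      rw [hS0, hq1]
      norm_num
      linarith
    · have hQ2' : 2 ≤ Q := by omega
      have hq2 : (2:ℝ) ≤ (q:ℝ) := by rw [← hQq]; exact_mod_cast hQ2'
      have hlog2 : Real.log 2 ≤ Real.log q := Real.log_le_log (by norm_num) hq2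
      have hld9 : (0.6931471803:ℝ) < Real.log 2 := Real.log_two_gt_d9
      have hS : SQ ≤ 1 + Real.log q := by
        have := harm1 Q
        rw [hQq] at this
        exact this
      have key1 : 2*((q:ℝ)*SQ) ≤ 2*(q:ℝ)*(1 + Real.log q) := by nlinarith [hq0]
      have key2 : 2*(q:ℝ)*(1 + Real.log q) ≤ 6*((q:ℝ)*Real.log q) := by nlinarith [hq0]
      linarith
  calc ∑ y ∈ Finset.Ioc (0:ℤ) q, min U (dzz (γ + (a:ℝ)*y/(q:ℝ) + θ*y/(q:ℝ)^2))⁻¹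
      ≤ ∑ r ∈ Finset.Ico (0:ℤ) q, g r := step2
    _ = ∑ n ∈ Finset.range (Q+1), ∑ r ∈ (Finset.Ico (0:ℤ) q).filter (fun r => m r = n), g r := step3
    _ ≤ ∑ n ∈ Finset.range (Q+1), 2 * bnd n := Finset.sum_le_sum (fun n _ => step5 n)
    _ ≤ 4*U + 2*((q:ℝ) * SQ) := step6
    _ ≤ 6 * (U + (q:ℝ) * Real.log q) := final


lemma sum_blocks (f : ℤ → ℝ) (q : ℤ) (n : ℕ) :
    ∑ x ∈ Finset.Ioc (0:ℤ) ((n:ℤ)*q), f x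
      = ∑ j ∈ Finset.range n, ∑ y ∈ Finset.Ioc (0:ℤ) q, f ((j:ℤ)*q + y) := by
  rcases le_or_gt q 0 with hq | hq
  · have h1 : ∀ k : ℕ, Finset.Ioc (0:ℤ) ((k:ℤ)*q) = ∅ := by
      intro k
      apply Finset.Ioc_eq_empty
      push_neg
      have : (k:ℤ)*q ≤ 0 := mul_nonpos_of_nonneg_of_nonpos (by positivity) hq
      omega
    have h2 : Finset.Ioc (0:ℤ) q = ∅ := by
      apply Finset.Ioc_eq_empty; omega
    simp [h1, h2]
  · induction n with
    | zero => simp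
    | succ k ih =>
      have hstep : Finset.Ioc (0:ℤ) (((k+1:ℕ):ℤ)*q)
          = Finset.Ioc (0:ℤ) ((k:ℕ)*q) ∪ Finset.Ioc ((k:ℕ)*q : ℤ) (((k+1:ℕ):ℤ)*q) := by
        rw [Finset.Ioc_union_Ioc_eq_Ioc]
        · positivity
        · push_cast; nlinarith
      have hdisj : Disjoint (Finset.Ioc (0:ℤ) ((k:ℕ)*q))
          (Finset.Ioc ((k:ℕ)*q : ℤ) (((k+1:ℕ):ℤ)*q)) := by
        apply Finset.disjoint_left.2
        intro x hx hx2
        rw [Finset.mem_Ioc] at hx hx2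
        omega
      rw [hstep, Finset.sum_union hdisj, ih, Finset.sum_range_succ]
      congr 1
      have hmap : Finset.Ioc ((k:ℕ)*q : ℤ) (((k+1:ℕ):ℤ)*q)
          = (Finset.Ioc (0:ℤ) q).map (addLeftEmbedding ((k:ℕ)*q : ℤ)) := by
        rw [Finset.map_add_left_Ioc]
        congr 1
        · ring
        · push_cast; ring
      rw [hmap, Finset.sum_map]
      apply Finset.sum_congr rfl
      intro y _
      simp only [addLeftEmbedding_apply]

theorem stmt_2 (a q : ℤ) (hq : 1 ≤ q) (hgcd : Int.gcd a q = 1)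
    (θ : ℝ) (hθ : |θ| ≤ 1) (α : ℝ) (hα : α = (a : ℝ) / q + θ / (q : ℝ) ^ 2)
    (β : ℝ) (U : ℝ) (hU : 0 < U) (P : ℤ) (hP : 1 ≤ P) :
    ∑ x ∈ Finset.Icc 1 P,
        min U (min (Int.fract (α * x + β)) (1 - Int.fract (α * x + β)))⁻¹
      ≤ 6 * ((P : ℝ) / q + 1) * (U + q * Real.log q) := by
  have hq0 : (0:ℝ) < q := by exact_mod_cast hq
  have hqz : 0 < q := hq
  set f : ℤ → ℝ := fun x => min U (dzz (α * x + β))⁻¹ with hf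
  have f_nonneg : ∀ x, 0 ≤ f x := by
    intro x; rw [hf]; dsimp only
    refine le_min hU.le (inv_nonneg.2 ?_)
    unfold dzz
    refine le_min (Int.fract_nonneg _) (by linarith [Int.fract_lt_one (α * x + β)])
  -- number of blocks
  set J : ℤ := (P + q - 1) / q with hJ
  have hJq : P ≤ J * q := by
    have h1 := Int.mul_ediv_add_emod (P + q - 1) q
    have h2 := Int.emod_lt_of_pos (P + q - 1) hqz
    have h3 := Int.emod_nonneg (P + q - 1) (by omega : q ≠ 0)
    nlinarith [h1, h2, h3]
  have hJ1 : 1 ≤ J := by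
    rw [hJ]
    rw [Int.le_ediv_iff_mul_le hqz]
    omega
  have hJreal : (J:ℝ) ≤ (P:ℝ)/q + 1 := by
    have h1 : J * q ≤ P + q - 1 := Int.ediv_mul_le _ (by omega)
    have h2 : (J:ℝ) * q ≤ (P:ℝ) + q - 1 := by exact_mod_cast h1
    rw [← sub_nonneg]
    have : (P:ℝ)/q + 1 - J = ((P:ℝ) + q - J*q)/q := by field_simp
    rw [this]
    apply div_nonneg _ hq0.le
    linarith
  -- main bound
  have hIcc : Finset.Icc (1:ℤ) P = Finset.Ioc (0:ℤ) P := by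
    ext x; simp [Int.lt_iff_add_one_le]
  have hsub : ∑ x ∈ Finset.Ioc (0:ℤ) P, f x ≤ ∑ x ∈ Finset.Ioc (0:ℤ) (J*q), f x := by
    apply Finset.sum_le_sum_of_subset_of_nonneg
    · apply Finset.Ioc_subset_Ioc le_rfl hJq
    · intro i _ _; exact f_nonneg i
  have hJtoNat : ((J.toNat : ℤ)) = J := Int.toNat_of_nonneg (by omega)
  have hdecomp : ∑ x ∈ Finset.Ioc (0:ℤ) (J*q), f x
      = ∑ j ∈ Finset.range J.toNat, ∑ y ∈ Finset.Ioc (0:ℤ) q, f ((j:ℤ)*q + y) := by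
    rw [← hJtoNat]
    exact sum_blocks f q J.toNat
  have hblock : ∀ j : ℕ, ∑ y ∈ Finset.Ioc (0:ℤ) q, f ((j:ℤ)*q + y)
      ≤ 6 * (U + (q:ℝ) * Real.log q) := by
    intro j
    have heq : ∀ y : ℤ, f ((j:ℤ)*q + y)
        = min U (dzz ((θ*j/(q:ℝ) + β) + (a:ℝ)*y/(q:ℝ) + θ*y/(q:ℝ)^2))⁻¹ := by
      intro y
      rw [hf]; dsimp only
      congr 2
      rw [show α * (((j:ℤ)*q + y : ℤ):ℝ) + β
          = ((a*(j:ℤ) : ℤ):ℝ) + ((θ*j/(q:ℝ) + β) + (a:ℝ)*y/(q:ℝ) + θ*y/(q:ℝ)^2) by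
        rw [hα]; push_cast; field_simp; ring]
      rw [dzz_int_add]
    calc ∑ y ∈ Finset.Ioc (0:ℤ) q, f ((j:ℤ)*q + y)
        = ∑ y ∈ Finset.Ioc (0:ℤ) q,
            min U (dzz ((θ*j/(q:ℝ) + β) + (a:ℝ)*y/(q:ℝ) + θ*y/(q:ℝ)^2))⁻¹ :=
          Finset.sum_congr rfl (fun y _ => heq y)
      _ ≤ 6 * (U + (q:ℝ) * Real.log q) := block_bound a q hq hgcd θ hθ U hU _
  have hB0 : 0 ≤ 6 * (U + (q:ℝ) * Real.log q) := by
    have : 0 ≤ Real.log q := Real.log_nonneg (by exact_mod_cast hq)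
    positivity
  calc ∑ x ∈ Finset.Icc 1 P,
        min U (min (Int.fract (α * x + β)) (1 - Int.fract (α * x + β)))⁻¹
      = ∑ x ∈ Finset.Ioc (0:ℤ) P, f x := by rw [hIcc]; rfl
    _ ≤ ∑ x ∈ Finset.Ioc (0:ℤ) (J*q), f x := hsub
    _ = ∑ j ∈ Finset.range J.toNat, ∑ y ∈ Finset.Ioc (0:ℤ) q, f ((j:ℤ)*q + y) := hdecomp
    _ ≤ ∑ j ∈ Finset.range J.toNat, 6 * (U + (q:ℝ) * Real.log q) :=
        Finset.sum_le_sum (fun j _ => hblock j)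
    _ = (J.toNat : ℝ) * (6 * (U + (q:ℝ) * Real.log q)) := by
        rw [Finset.sum_const, Finset.card_range, nsmul_eq_mul]
    _ ≤ ((P:ℝ)/q + 1) * (6 * (U + (q:ℝ) * Real.log q)) := by
        apply mul_le_mul_of_nonneg_right _ hB0
        have : ((J.toNat : ℕ):ℝ) = (J:ℝ) := by exact_mod_cast congrArg Int.cast hJtoNat
        rw [this]; exact hJreal
    _ = 6 * ((P : ℝ) / q + 1) * (U + q * Real.log q) := by ring
end

section
/- There exists an absolute constant m₀ such that for all integers m > m₀, all integers a with gcd(a,m) = 1, and all integers N with 1 ≤ N ≤ m, the incomplete Gauss sum satisfies |∑_{x=1}^{N} e^{2πi a x²/m}| ≤ 5√(m·ln m). -/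
open Finset
open Complex Finset
noncomputable def Complex.abs : AbsoluteValue ℂ ℝ where
  toFun z := ‖z‖
  map_mul' := norm_mul
  nonneg' := norm_nonneg
  eq_zero' _ := norm_eq_zero
  add_le' := norm_add_le

lemma Complex.abs_apply (z : ℂ) : Complex.abs z = ‖z‖ := rfl
lemma Complex.abs_exp_ofReal_mul_I (x : ℝ) : Complex.abs (Complex.exp (x * Complex.I)) = 1 :=
  Complex.norm_exp_ofReal_mul_I x
lemma Complex.abs_I : Complex.abs Complex.I = 1 := Complex.norm_I
lemma Complex.abs_ofReal (r : ℝ) : Complex.abs (r : ℂ) = |r| := by simp [Complex.abs_apply]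
lemma Complex.abs_two : Complex.abs 2 = 2 := by simp [Complex.abs_apply]
lemma Complex.abs_conj (z : ℂ) : Complex.abs ((starRingEnd ℂ) z) = Complex.abs z :=
  Complex.norm_conj z
noncomputable def ee (t : ℝ) : ℂ := Complex.exp (2 * Real.pi * Complex.I * t)

lemma ee_abs (t : ℝ) : Complex.abs (ee t) = 1 := by
  unfold ee
  rw [show (2 * Real.pi * Complex.I * t : ℂ) = (2 * Real.pi * t : ℝ) * Complex.I by push_cast; ring]
  exact Complex.abs_exp_ofReal_mul_I _

lemma ee_zpow (t : ℝ) (n : ℤ) : ee (t * n) = ee t ^ n := by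
  unfold ee
  rw [← Complex.exp_int_mul]
  congr 1
  push_cast; ring

lemma ee_add (s t : ℝ) : ee (s + t) = ee s * ee t := by
  unfold ee
  rw [← Complex.exp_add]
  congr 1
  push_cast; ring

lemma conj_ee (t : ℝ) : (starRingEnd ℂ) (ee t) = ee (-t) := by
  unfold ee
  rw [← Complex.exp_conj]
  congr 1
  rw [map_mul, map_mul, map_mul, Complex.conj_I, Complex.conj_ofReal, Complex.conj_ofReal,
    map_ofNat]
  push_cast; ring

lemma abs_one_sub_exp (θ : ℝ) :
    Complex.abs (1 - Complex.exp ((θ:ℂ) * Complex.I)) = 2 * |Real.sin (θ / 2)| := by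
  set x : ℂ := ((θ/2:ℝ):ℂ) with hx
  have h : (1 : ℂ) - Complex.exp ((θ:ℂ) * Complex.I)
      = -Complex.exp (x * Complex.I) * (2 * (Real.sin (θ/2) : ℂ) * Complex.I) := by
    rw [show ((θ:ℂ)) = 2 * x by rw [hx]; push_cast; ring, Complex.exp_mul_I, Complex.exp_mul_I,
      Complex.sin_two_mul, Complex.cos_two_mul, Complex.ofReal_sin, ← hx]
    have h2 := Complex.sin_sq_add_cos_sq x
    linear_combination 2 * Complex.sin x ^ 2 * Complex.I_sq - 2 * h2
  rw [h, map_mul, map_mul, map_mul, Complex.abs.map_neg, Complex.abs_exp_ofReal_mul_I,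
    Complex.abs_I, Complex.abs_ofReal, Complex.abs_two]
  ring

lemma abs_sum_zpow_le_card (z : ℂ) (hz : Complex.abs z = 1) (s : Finset ℤ) :
    Complex.abs (∑ y ∈ s, z ^ y) ≤ s.card := by
  calc Complex.abs (∑ y ∈ s, z ^ y) ≤ ∑ y ∈ s, Complex.abs (z ^ y) := by
        exact Complex.abs.sum_le _ _
    _ = ∑ y ∈ s, 1 := by
        refine Finset.sum_congr rfl fun y _ => ?_
        rw [map_zpow₀, hz, one_zpow]
    _ = s.card := by simp

lemma abs_sum_zpow_Icc (z : ℂ) (hz : Complex.abs z = 1) (hz1 : z ≠ 1) (u v : ℤ) :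
    Complex.abs (∑ y ∈ Finset.Icc u v, z ^ y) ≤ 2 / Complex.abs (1 - z) := by
  have hz0 : z ≠ 0 := by
    intro h; rw [h] at hz; simp at hz
  have habs : 0 < Complex.abs (1 - z) := by
    rw [AbsoluteValue.pos_iff]
    intro h
    exact hz1 (by linear_combination -h)
  rcases le_or_gt u v with huv | huv
  · set L : ℕ := (v + 1 - u).toNat with hL
    have hre : ∑ y ∈ Finset.Icc u v, z ^ y = ∑ j ∈ Finset.range L, z ^ u * z ^ (j : ℤ) := by
      refine Finset.sum_nbij' (fun y => (y - u).toNat) (fun j => u + j) ?_ ?_ ?_ ?_ ?_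
      · intro y hy; simp only [Finset.mem_Icc] at hy; simp only [Finset.mem_range]; omega
      · intro j hj; simp only [Finset.mem_range] at hj; simp only [Finset.mem_Icc]; omega
      · intro y hy; simp only [Finset.mem_Icc] at hy; omega
      · intro j hj; simp only [Finset.mem_range] at hj; omega
      · intro y hy
        simp only [Finset.mem_Icc] at hy
        rw [← zpow_add₀ hz0]
        congr 1
        omega
    rw [hre, ← Finset.mul_sum]
    have hgeo : ∑ j ∈ Finset.range L, z ^ (j:ℤ) = (z ^ L - 1) / (z - 1) := by
      rw [← geom_sum_eq hz1]
      exact Finset.sum_congr rfl fun j _ => by rw [zpow_natCast]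
    rw [hgeo, map_mul, map_zpow₀, hz, one_zpow, one_mul, map_div₀]
    have h1 : Complex.abs (z ^ L - 1) ≤ 2 := by
      calc Complex.abs (z ^ L - 1) ≤ Complex.abs (z ^ L) + Complex.abs 1 := by
            exact AbsoluteValue.sub_le_add _ _ _
        _ = 2 := by rw [map_pow, hz, one_pow, map_one]; norm_num
    have h2 : Complex.abs (z - 1) = Complex.abs (1 - z) := by
      rw [← AbsoluteValue.map_neg Complex.abs]; congr 1; ring
    rw [h2]
    gcongr
  · rw [Finset.Icc_eq_empty (by omega)]
    simp
    positivity

lemma sin_lb (m : ℕ) (hm : 0 < m) (x : ℤ) (hk : x % (m:ℤ) ≠ 0) :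
    1 / |Real.sin (Real.pi * x / m)| ≤
      (m:ℝ)/2 * (1/((x % (m:ℤ) : ℤ):ℝ) + 1/((m:ℝ) - ((x % (m:ℤ) : ℤ):ℝ))) := by
  set k : ℤ := x % (m:ℤ) with hkdef
  have hk1 : 1 ≤ k := by
    have := Int.emod_nonneg x (by exact_mod_cast hm.ne' : (m:ℤ) ≠ 0)
    omega
  have hk2 : k ≤ m - 1 := by
    have := Int.emod_lt_of_pos x (by exact_mod_cast hm : (0:ℤ) < m)
    omega
  have hmR : (0:ℝ) < m := by exact_mod_cast hm
  have hm1 : 1 ≤ m := hm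
  set q : ℤ := x / (m:ℤ) with hqdef
  have hxint : x = k + q * m := by
    rw [hkdef, hqdef]; linarith [Int.emod_add_mul_ediv x (m:ℤ)]
  have hper : |Real.sin (Real.pi * x / m)| = |Real.sin (Real.pi * k / m)| := by
    have hx : (x:ℝ) = (k:ℝ) + (q:ℝ) * m := by exact_mod_cast congrArg (Int.cast : ℤ → ℝ) hxint
    rw [show Real.pi * x / m = Real.pi * k / m + (q:ℝ) * Real.pi by
      rw [hx]; field_simp]
    rw [Real.sin_add_int_mul_pi, abs_mul]
    have : |((-1:ℝ)) ^ q| = 1 := by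
      rcases Int.even_or_odd q with hq | hq
      · rw [hq.neg_one_zpow]; norm_num
      · rw [Odd.neg_one_zpow hq]; norm_num
    rw [this, one_mul]
  rw [hper]
  -- now bound sin(πk/m) from below by 2*min(k,m-k)/m
  have hkR1 : (1:ℝ) ≤ (k:ℝ) := by exact_mod_cast hk1
  have hkRm : (k:ℝ) ≤ (m:ℝ) - 1 := by
    have : ((k:ℝ)) ≤ ((m:ℤ):ℝ) - 1 := by exact_mod_cast hk2
    simpa using this
  have hsin_pos : 0 < Real.sin (Real.pi * k / m) := by
    apply Real.sin_pos_of_pos_of_lt_pi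
    · positivity
    · rw [div_lt_iff₀ hmR]
      calc Real.pi * k ≤ Real.pi * ((m:ℝ)-1) := by nlinarith [Real.pi_pos]
        _ < Real.pi * m := by nlinarith [Real.pi_pos]
  have habs : |Real.sin (Real.pi * k / m)| = Real.sin (Real.pi * k / m) := abs_of_pos hsin_pos
  rw [habs]
  have key : 2 * (min (k:ℝ) ((m:ℝ) - k)) / m ≤ Real.sin (Real.pi * k / m) := by
    rcases le_total ((k:ℝ)) ((m:ℝ) - k) with hc | hc
    · rw [min_eq_left hc]
      have h1 : Real.pi * k / m ≤ Real.pi / 2 := by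
        rw [div_le_div_iff₀ hmR (by norm_num : (0:ℝ) < 2)]
        nlinarith [Real.pi_pos]
      have := Real.mul_le_sin (x := Real.pi * k / m) (by positivity) h1
      calc 2 * (k:ℝ) / m = 2 / Real.pi * (Real.pi * k / m) := by
            field_simp
        _ ≤ _ := this
    · rw [min_eq_right hc]
      have heq : Real.sin (Real.pi * k / m) = Real.sin (Real.pi * ((m:ℝ) - k) / m) := by
        rw [← Real.sin_pi_sub]
        congr 1
        field_simp
      rw [heq]
      have h1 : Real.pi * ((m:ℝ)-k) / m ≤ Real.pi / 2 := by
        rw [div_le_div_iff₀ hmR (by norm_num : (0:ℝ) < 2)]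
        nlinarith [Real.pi_pos]
      have := Real.mul_le_sin (x := Real.pi * ((m:ℝ)-k) / m)
        (div_nonneg (by nlinarith [Real.pi_pos]) hmR.le) h1
      calc 2 * ((m:ℝ)-(k:ℝ)) / m = 2 / Real.pi * (Real.pi * ((m:ℝ)-k) / m) := by
            field_simp
        _ ≤ _ := this
  have hmin_pos : 0 < min (k:ℝ) ((m:ℝ) - k) := by
    apply lt_min <;> linarith
  have hlb : 2 * (min (k:ℝ) ((m:ℝ) - k)) / m > 0 := by positivity
  have step1 : 1 / Real.sin (Real.pi * k / m) ≤ (m:ℝ) / (2 * min (k:ℝ) ((m:ℝ) - k)) := by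
    rw [div_le_div_iff₀ hsin_pos (by positivity)]
    calc 1 * (2 * min (k:ℝ) ((m:ℝ)-k)) = (2 * min (k:ℝ) ((m:ℝ)-k) / m) * m := by
          field_simp
      _ ≤ Real.sin (Real.pi * k / m) * m := by
          exact mul_le_mul_of_nonneg_right key hmR.le
      _ = (m:ℝ) * Real.sin (Real.pi * k / m) := by ring
  refine step1.trans ?_
  have h2 : (m:ℝ) / (2 * min (k:ℝ) ((m:ℝ)-k)) = (m:ℝ)/2 * (1 / min (k:ℝ) ((m:ℝ)-k)) := by
    field_simp
  rw [h2]
  have h3 : 1 / min (k:ℝ) ((m:ℝ)-k) ≤ 1/(k:ℝ) + 1/((m:ℝ)-(k:ℝ)) := by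
    rcases le_total ((k:ℝ)) ((m:ℝ) - k) with hc | hc
    · rw [min_eq_left hc]
      have : 0 < 1/((m:ℝ)-k) := by
        apply one_div_pos.mpr; linarith
      linarith
    · rw [min_eq_right hc]
      have : 0 < 1/(k:ℝ) := by positivity
      linarith
  calc (m:ℝ)/2 * (1 / min (k:ℝ) ((m:ℝ)-k)) ≤ (m:ℝ)/2 * (1/(k:ℝ) + 1/((m:ℝ)-(k:ℝ))) := by
        apply mul_le_mul_of_nonneg_left h3 (by positivity)
    _ = _ := rfl

lemma two_d_eq (m d : ℤ) (hm : 0 < m) (hdvd : m ∣ 2*d) (hd : d ≠ 0)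
    (hlt : d < m) (hgt : -m < d) : 2*d = m ∨ 2*d = -m := by
  obtain ⟨c, hc⟩ := hdvd
  have h1 : c < 2 := by nlinarith
  have h2 : -2 < c := by nlinarith
  have h3 : c ≠ 0 := by rintro rfl; omega
  interval_cases c <;> omega

lemma fiber_card_le_two (m : ℕ) (hm : 0 < m) (a : ℤ) (ha : Int.gcd a m = 1)
    (N : ℤ) (hN : N ≤ m) (k : ℤ) :
    ((Finset.Icc (1:ℤ) (N-1)).filter (fun h => (2*a*h) % m = k)).card ≤ 2 := by
  by_contra hcon
  push_neg at hcon
  rw [Finset.two_lt_card_iff] at hcon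
  obtain ⟨h₁, h₂, h₃, m₁, m₂, m₃, h12, h13, h23⟩ := hcon
  simp only [Finset.mem_filter, Finset.mem_Icc] at m₁ m₂ m₃
  have hco : IsCoprime (m:ℤ) a := by
    rw [Int.isCoprime_iff_gcd_eq_one, Int.gcd_comm]
    exact ha
  have key : ∀ u v : ℤ, 1 ≤ u → u ≤ N-1 → 1 ≤ v → v ≤ N-1 → u ≠ v →
      (2*a*u) % m = (2*a*v) % m → 2*(u-v) = m ∨ 2*(u-v) = -m := by
    intro u v hu1 hu2 hv1 hv2 huv heq
    have hdvd : (m:ℤ) ∣ (2*a*u - 2*a*v) := Int.ModEq.dvd heq.symm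
    have hdvd2 : (m:ℤ) ∣ (2*(u-v))*a := by
      convert hdvd using 1; ring
    have hdvd3 : (m:ℤ) ∣ 2*(u-v) := hco.dvd_of_dvd_mul_right hdvd2
    exact two_d_eq m (u-v) (by exact_mod_cast hm) hdvd3 (by omega) (by omega) (by omega)
  have e1 := key h₁ h₂ m₁.1.1 m₁.1.2 m₂.1.1 m₂.1.2 h12 (m₁.2.trans m₂.2.symm)
  have e2 := key h₁ h₃ m₁.1.1 m₁.1.2 m₃.1.1 m₃.1.2 h13 (m₁.2.trans m₃.2.symm)
  have e3 := key h₂ h₃ m₂.1.1 m₂.1.2 m₃.1.1 m₃.1.2 h23 (m₂.2.trans m₃.2.symm)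
  have : (0:ℤ) < m := by exact_mod_cast hm
  omega

lemma count_le (m : ℕ) (hm : 0 < m) (a : ℤ) (ha : Int.gcd a m = 1)
    (N : ℤ) (hN : N ≤ m) (b : ℤ → ℝ) (hb : ∀ k ∈ Finset.Icc (0:ℤ) (m-1), 0 ≤ b k) :
    ∑ h ∈ Finset.Icc (1:ℤ) (N-1), b ((2*a*h) % m)
      ≤ 2 * ∑ k ∈ Finset.Icc (0:ℤ) (m-1), b k := by
  have hmZ : (0:ℤ) < m := by exact_mod_cast hm
  have hmaps : ∀ h ∈ Finset.Icc (1:ℤ) (N-1), (2*a*h) % m ∈ Finset.Icc (0:ℤ) (m-1) := by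
    intro h _
    simp only [Finset.mem_Icc]
    constructor
    · exact Int.emod_nonneg _ hmZ.ne'
    · have := Int.emod_lt_of_pos (2*a*h) hmZ
      omega
  rw [← Finset.sum_fiberwise_of_maps_to hmaps (fun h => b ((2*a*h) % m))]
  rw [Finset.mul_sum]
  refine Finset.sum_le_sum fun k hk => ?_
  have : ∑ h ∈ (Finset.Icc (1:ℤ) (N-1)).filter (fun h => (2*a*h) % m = k), b ((2*a*h) % m)
      = ∑ h ∈ (Finset.Icc (1:ℤ) (N-1)).filter (fun h => (2*a*h) % m = k), b k := by
    refine Finset.sum_congr rfl fun h hh => ?_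
    rw [(Finset.mem_filter.mp hh).2]
  rw [this, Finset.sum_const, nsmul_eq_mul]
  have hcard := fiber_card_le_two m hm a ha N hN k
  calc (((Finset.Icc (1:ℤ) (N-1)).filter (fun h => (2*a*h) % m = k)).card : ℝ) * b k
      ≤ 2 * b k := by
        apply mul_le_mul_of_nonneg_right _ (hb k hk)
        exact_mod_cast hcard
    _ = 2 * b k := rfl

lemma harm_bound (m : ℕ) (hm : 1 ≤ m) :
    ∑ k ∈ Finset.Icc (1:ℤ) ((m:ℤ)-1), (1/(k:ℝ) + 1/((m:ℝ) - (k:ℝ)))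
      ≤ 2 * (1 + Real.log m) := by
  have h1 : ∑ k ∈ Finset.Icc (1:ℤ) ((m:ℤ)-1), (1/((m:ℝ) - (k:ℝ)))
      = ∑ k ∈ Finset.Icc (1:ℤ) ((m:ℤ)-1), 1/(k:ℝ) := by
    refine Finset.sum_nbij' (fun k => (m:ℤ) - k) (fun k => (m:ℤ) - k) ?_ ?_ ?_ ?_ ?_
    · intro k hk; simp only [Finset.mem_Icc] at *; omega
    · intro k hk; simp only [Finset.mem_Icc] at *; omega
    · intro k hk; omega
    · intro k hk; omega
    · intro k hk; push_cast; ring_nf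
  rw [Finset.sum_add_distrib, h1, ← two_mul]
  have h2 : ∑ k ∈ Finset.Icc (1:ℤ) ((m:ℤ)-1), 1/(k:ℝ) = (harmonic (m-1) : ℝ) := by
    rw [harmonic_eq_sum_Icc]
    push_cast
    refine Finset.sum_nbij' (fun k => k.toNat) (fun k => (k:ℤ)) ?_ ?_ ?_ ?_ ?_
    · intro k hk; simp only [Finset.mem_Icc] at *; omega
    · intro k hk; simp only [Finset.mem_Icc] at *; omega
    · intro k hk; simp only [Finset.mem_Icc] at hk; omega
    · intro k hk; simp only [Finset.mem_Icc] at hk; omega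
    · intro k hk; simp only [Finset.mem_Icc] at hk
      rw [one_div]
      congr 1
      exact_mod_cast (Int.toNat_of_nonneg (by omega)).symm
  rw [h2]
  have h3 : (harmonic (m-1) : ℝ) ≤ 1 + Real.log (m-1 : ℕ) := harmonic_le_one_add_log _
  have h4 : Real.log ((m-1 : ℕ) : ℝ) ≤ Real.log m := by
    rcases Nat.eq_or_lt_of_le hm with h | h
    · rw [← h]; norm_num
    · apply Real.log_le_log
      · have h1m : (1:ℕ) ≤ m - 1 := by omega
        have : (1:ℝ) ≤ ((m-1:ℕ):ℝ) := by exact_mod_cast h1m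
        linarith
      · have : (m-1:ℕ) ≤ m := Nat.sub_le m 1
        exact_mod_cast this
  linarith

lemma reindex_weyl (N : ℤ) (F : ℤ → ℤ → ℂ) :
    ∑ x ∈ Finset.Icc (1:ℤ) N, ∑ y ∈ Finset.Icc (1:ℤ) N, F x y
    = ∑ h ∈ Finset.Icc (1-N) (N-1),
        ∑ y ∈ Finset.Icc (max 1 (1-h)) (min N (N-h)), F (y+h) y := by
  rw [← Finset.sum_product']
  rw [show (∑ h ∈ Finset.Icc (1-N) (N-1),
        ∑ y ∈ Finset.Icc (max 1 (1-h)) (min N (N-h)), F (y+h) y)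
      = ∑ p ∈ (Finset.Icc (1-N) (N-1)).sigma
          (fun h => Finset.Icc (max 1 (1-h)) (min N (N-h))), F (p.2 + p.1) p.2
    from (Finset.sum_sigma (Finset.Icc (1-N) (N-1))
      (fun h => Finset.Icc (max 1 (1-h)) (min N (N-h)))
      (fun p => F (p.snd + p.fst) p.snd)).symm]
  refine Finset.sum_nbij' (fun p => ⟨p.1 - p.2, p.2⟩) (fun s => (s.2 + s.1, s.2)) ?_ ?_ ?_ ?_ ?_
  · rintro ⟨x, y⟩ hp
    simp only [Finset.mem_product, Finset.mem_Icc] at hp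
    simp only [Finset.mem_sigma, Finset.mem_Icc]
    omega
  · rintro ⟨h, y⟩ hs
    simp only [Finset.mem_sigma, Finset.mem_Icc] at hs
    simp only [Finset.mem_product, Finset.mem_Icc]
    omega
  · rintro ⟨x, y⟩ hp; simp only []; congr 1 <;> omega
  · rintro ⟨h, y⟩ hs; simp only []; congr 1; omega
  · rintro ⟨x, y⟩ hp
    simp only []
    congr 1
    omega
noncomputable def bfun (m N : ℕ) (k : ℤ) : ℝ :=
  if k = 0 then (N:ℝ) else (m:ℝ)/2 * (1/(k:ℝ) + 1/((m:ℝ) - (k:ℝ)))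

lemma bfun_nonneg (m N : ℕ) (hm : 0 < m) (k : ℤ) (hk : k ∈ Finset.Icc (0:ℤ) ((m:ℤ)-1)) :
    0 ≤ bfun m N k := by
  simp only [Finset.mem_Icc] at hk
  rw [bfun]
  split_ifs with h
  · positivity
  · have h1 : (1:ℝ) ≤ (k:ℝ) := by exact_mod_cast (by omega : (1:ℤ) ≤ k)
    have h2 : (k:ℝ) ≤ (m:ℝ) - 1 := by
      have : (k:ℝ) ≤ ((m:ℤ):ℝ) - 1 := by exact_mod_cast (by omega : k ≤ (m:ℤ) - 1)
      simpa using this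
    have : (0:ℝ) < (m:ℝ) := by exact_mod_cast hm
    have p1 : 0 < 1/(k:ℝ) := by positivity
    have p2 : 0 < 1/((m:ℝ) - k) := one_div_pos.mpr (by linarith)
    nlinarith

lemma bfun_neg (m N : ℕ) (hm : 0 < m) (x : ℤ) :
    bfun m N ((-x) % m) = bfun m N (x % m) := by
  have hmZ : (0:ℤ) < m := by exact_mod_cast hm
  rcases eq_or_ne (x % (m:ℤ)) 0 with h | h
  · have h2 : (-x) % (m:ℤ) = 0 := by
      exact Int.emod_eq_zero_of_dvd (dvd_neg.mpr (Int.dvd_of_emod_eq_zero h))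
    rw [h, h2]
  · have hb : 0 ≤ x % (m:ℤ) := Int.emod_nonneg _ hmZ.ne'
    have hlt : x % (m:ℤ) < m := Int.emod_lt_of_pos _ hmZ
    have h2 : (-x) % (m:ℤ) = m - x % m := by
      have e1 : (-x) % (m:ℤ) = ((m:ℤ) - x % m) % m := by
        rw [Int.emod_eq_emod_iff_emod_sub_eq_zero]
        exact Int.emod_eq_zero_of_dvd ⟨-(x / (m:ℤ)) - 1, by linarith [Int.emod_add_mul_ediv x (m:ℤ)]⟩
      rw [e1]
      exact Int.emod_eq_of_lt (by omega) (by omega)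
    rw [h2, bfun, bfun, if_neg h, if_neg (by omega)]
    have : (((m:ℤ) - x % m : ℤ):ℝ) = (m:ℝ) - ((x % (m:ℤ) : ℤ):ℝ) := by push_cast; ring
    rw [this]
    ring_nf
lemma zsum_bound (m : ℕ) (hm : 0 < m) (N : ℕ) (x u v : ℤ)
    (hcard : v + 1 - u ≤ (N:ℤ)) :
    Complex.abs (∑ y ∈ Finset.Icc u v, (ee ((x:ℝ)/m)) ^ y) ≤ bfun m N (x % m) := by
  set z : ℂ := ee ((x:ℝ)/m) with hzdef
  have hz : Complex.abs z = 1 := ee_abs _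
  have hmR : (0:ℝ) < m := by exact_mod_cast hm
  by_cases hk : x % (m:ℤ) = 0
  · rw [bfun, if_pos hk]
    refine (abs_sum_zpow_le_card z hz _).trans ?_
    rw [Int.card_Icc]
    have h1 : ((v + 1 - u).toNat : ℤ) ≤ (N:ℤ) := by omega
    exact_mod_cast h1
  · rw [bfun, if_neg hk]
    have hz1 : z ≠ 1 := by
      intro h1
      apply hk
      rw [hzdef, ee] at h1
      rw [Complex.exp_eq_one_iff] at h1
      obtain ⟨n, hn⟩ := h1
      have h2πI : (2 * (Real.pi:ℂ) * Complex.I) ≠ 0 := by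
        simp [Real.pi_ne_zero, Complex.I_ne_zero]
      have ht : ((((x:ℝ)/m : ℝ)):ℂ) = (n:ℂ) := by
        apply mul_left_cancel₀ h2πI
        rw [show (2 * (Real.pi:ℂ) * Complex.I) * ((((x:ℝ)/m : ℝ)):ℂ)
            = 2 * (Real.pi:ℂ) * Complex.I * ((((x:ℝ)/m : ℝ)):ℂ) from rfl]
        rw [hn]; ring
      have htR : ((x:ℝ)/m : ℝ) = (n:ℝ) := by exact_mod_cast ht
      have hxm : (x:ℝ) = (n:ℝ) * m := by
        field_simp at htR
        linarith
      have hxZ : x = n * m := by exact_mod_cast hxm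
      rw [hxZ]
      simp [Int.mul_emod_left]
    refine (abs_sum_zpow_Icc z hz hz1 u v).trans ?_
    have habs1z : Complex.abs (1 - z) = 2 * |Real.sin (Real.pi * x / m)| := by
      rw [hzdef, ee]
      rw [show (2 * (Real.pi:ℂ) * Complex.I * (((x:ℝ)/m : ℝ):ℂ))
          = (((2 * Real.pi * ((x:ℝ)/m) : ℝ)):ℂ) * Complex.I by push_cast; ring]
      rw [abs_one_sub_exp]
      congr 2
      field_simp
    rw [habs1z]
    have : 2 / (2 * |Real.sin (Real.pi * x / m)|) = 1 / |Real.sin (Real.pi * x / m)| := by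
      rcases eq_or_ne (|Real.sin (Real.pi * x / m)|) 0 with h0 | h0
      · rw [h0]; simp
      · field_simp
    rw [this]
    exact sin_lb m hm x hk

open Complex in
theorem stmt_3 :
    ∃ m₀ : ℕ, ∀ m : ℕ, m₀ < m → ∀ a : ℤ, Int.gcd a m = 1 →
      ∀ N : ℕ, 1 ≤ N → N ≤ m →
        ‖(∑ x ∈ Finset.Icc 1 N,
            Complex.exp (2 * Real.pi * Complex.I * a * (x : ℂ) ^ 2 / m))‖
          ≤ 5 * Real.sqrt (m * Real.log m) := by
  use 2
  intro m hm a ha N hN1 hNm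
  have hm0 : 0 < m := by omega
  have hmR : (0:ℝ) < m := by exact_mod_cast hm0
  have hmZ : (0:ℤ) < m := by exact_mod_cast hm0
  have hNZ1 : (1:ℤ) ≤ (N:ℤ) := by exact_mod_cast hN1
  have hNZm : ((N:ℤ)) ≤ (m:ℤ) := by exact_mod_cast hNm
  set g : ℤ → ℂ := fun x => ee (((a * x^2 : ℤ):ℝ) / m) with hg
  have hconv : (∑ x ∈ Finset.Icc 1 N,
        Complex.exp (2 * Real.pi * Complex.I * a * (x:ℂ)^2 / m))
      = ∑ x ∈ Finset.Icc (1:ℤ) (N:ℤ), g x := by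
    refine Finset.sum_nbij' (fun (x:ℕ) => (x:ℤ)) (fun x => x.toNat) ?_ ?_ ?_ ?_ ?_
    · intro x hx; simp only [Finset.mem_Icc] at *; omega
    · intro x hx; simp only [Finset.mem_Icc] at *; omega
    · intro x hx; omega
    · intro x hx; simp only [Finset.mem_Icc] at hx; omega
    · intro x hx
      rw [hg]; simp only []
      unfold ee
      congr 1
      push_cast
      ring
  rw [hconv]
  show Complex.abs _ ≤ _
  set S : ℂ := ∑ x ∈ Finset.Icc (1:ℤ) (N:ℤ), g x with hS
  set F : ℤ → ℤ → ℂ := fun x y => ee (((a*x^2:ℤ):ℝ)/m - ((a*y^2:ℤ):ℝ)/m) with hF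
  have hSS : S * (starRingEnd ℂ) S
      = ∑ x ∈ Finset.Icc (1:ℤ) (N:ℤ), ∑ y ∈ Finset.Icc (1:ℤ) (N:ℤ), F x y := by
    rw [hS, map_sum, Finset.sum_mul_sum]
    refine Finset.sum_congr rfl fun x _ => Finset.sum_congr rfl fun y _ => ?_
    rw [hg, hF]; simp only []
    rw [conj_ee, ← ee_add]
    congr 1
  have habs2 : Complex.abs S ^ 2
      = Complex.abs (∑ x ∈ Finset.Icc (1:ℤ) (N:ℤ), ∑ y ∈ Finset.Icc (1:ℤ) (N:ℤ), F x y) := by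
    rw [← hSS, map_mul, Complex.abs_conj, sq]
  rw [reindex_weyl] at habs2
  have hstep : Complex.abs S ^ 2
      ≤ ∑ h ∈ Finset.Icc (1-(N:ℤ)) ((N:ℤ)-1), bfun m N ((2*a*h) % m) := by
    rw [habs2]
    refine (Complex.abs.sum_le _ _).trans (Finset.sum_le_sum fun h hh => ?_)
    have hfac : ∀ y : ℤ, F (y+h) y
        = ee (((a*h^2:ℤ):ℝ)/m) * (ee (((2*a*h:ℤ):ℝ)/m)) ^ y := by
      intro y
      rw [hF]; simp only []
      rw [← ee_zpow, ← ee_add]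
      congr 1
      push_cast
      field_simp
      ring
    calc Complex.abs (∑ y ∈ Finset.Icc (max 1 (1-h)) (min (N:ℤ) ((N:ℤ)-h)), F (y+h) y)
        = Complex.abs (ee (((a*h^2:ℤ):ℝ)/m) *
            ∑ y ∈ Finset.Icc (max 1 (1-h)) (min (N:ℤ) ((N:ℤ)-h)),
              (ee (((2*a*h:ℤ):ℝ)/m)) ^ y) := by
          rw [Finset.mul_sum]
          congr 1
          exact Finset.sum_congr rfl fun y _ => hfac y
      _ = Complex.abs (∑ y ∈ Finset.Icc (max 1 (1-h)) (min (N:ℤ) ((N:ℤ)-h)),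
              (ee (((2*a*h:ℤ):ℝ)/m)) ^ y) := by
          rw [map_mul, ee_abs, one_mul]
      _ ≤ bfun m N ((2*a*h) % m) := by
          have := zsum_bound m hm0 N (2*a*h) (max 1 (1-h)) (min (N:ℤ) ((N:ℤ)-h)) (by omega)
          exact_mod_cast this
  set T : ℝ := ∑ h ∈ Finset.Icc (1:ℤ) ((N:ℤ)-1), bfun m N ((2*a*h) % m) with hT
  have hneg : ∑ h ∈ Finset.Icc (1-(N:ℤ)) (-1), bfun m N ((2*a*h)%m) = T := by
    rw [hT]
    refine Finset.sum_nbij' (fun h => -h) (fun h => -h) ?_ ?_ ?_ ?_ ?_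
    · intro h hh; simp only [Finset.mem_Icc] at *; omega
    · intro h hh; simp only [Finset.mem_Icc] at *; omega
    · intro h hh; ring
    · intro h hh; ring
    · intro h hh
      rw [show 2*a*(-h) = -(2*a*h) by ring, bfun_neg m N hm0]
  have hsplit : ∑ h ∈ Finset.Icc (1-(N:ℤ)) ((N:ℤ)-1), bfun m N ((2*a*h) % m)
      = T + (N:ℝ) + T := by
    rw [show Finset.Icc (1-(N:ℤ)) ((N:ℤ)-1)
        = Finset.Icc (1-(N:ℤ)) (-1) ∪ Finset.Icc 0 ((N:ℤ)-1) from by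
      ext t; simp only [Finset.mem_Icc, Finset.mem_union]; omega]
    rw [Finset.sum_union (by
      rw [Finset.disjoint_left]; intro t ht ht'
      simp only [Finset.mem_Icc] at ht ht'; omega)]
    rw [show Finset.Icc (0:ℤ) ((N:ℤ)-1) = insert 0 (Finset.Icc 1 ((N:ℤ)-1)) from by
      ext t; simp only [Finset.mem_Icc, Finset.mem_insert]; omega]
    rw [Finset.sum_insert (by simp [Finset.mem_Icc])]
    rw [hneg, ← hT]
    have h0 : bfun m N ((2*a*0) % m) = (N:ℝ) := by
      rw [show (2*a*0) % (m:ℤ) = 0 by simp, bfun, if_pos rfl]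
    rw [h0]
    ring
  have hcount : T ≤ 2 * ∑ k ∈ Finset.Icc (0:ℤ) ((m:ℤ)-1), bfun m N k := by
    rw [hT]
    exact count_le m hm0 a ha (N:ℤ) hNZm (bfun m N) (bfun_nonneg m N hm0)
  have hksum : ∑ k ∈ Finset.Icc (0:ℤ) ((m:ℤ)-1), bfun m N k
      ≤ (N:ℝ) + (m:ℝ) * (1 + Real.log m) := by
    rw [show Finset.Icc (0:ℤ) ((m:ℤ)-1) = insert 0 (Finset.Icc 1 ((m:ℤ)-1)) from by
      ext t; simp only [Finset.mem_Icc, Finset.mem_insert]; omega]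
    rw [Finset.sum_insert (by simp [Finset.mem_Icc])]
    have hb0 : bfun m N 0 = (N:ℝ) := by rw [bfun, if_pos rfl]
    rw [hb0]
    have heq : ∑ k ∈ Finset.Icc (1:ℤ) ((m:ℤ)-1), bfun m N k
        = (m:ℝ)/2 * ∑ k ∈ Finset.Icc (1:ℤ) ((m:ℤ)-1), (1/(k:ℝ) + 1/((m:ℝ)-(k:ℝ))) := by
      rw [Finset.mul_sum]
      refine Finset.sum_congr rfl fun k hk => ?_
      simp only [Finset.mem_Icc] at hk
      rw [bfun, if_neg (by omega)]
    rw [heq]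
    have hh := harm_bound m (by omega)
    have h2 : (m:ℝ)/2 * (∑ k ∈ Finset.Icc (1:ℤ) ((m:ℤ)-1), (1/(k:ℝ) + 1/((m:ℝ)-(k:ℝ))))
        ≤ (m:ℝ)/2 * (2 * (1 + Real.log m)) := by
      apply mul_le_mul_of_nonneg_left hh (by positivity)
    have h3 : (m:ℝ)/2 * (2 * (1 + Real.log m)) = (m:ℝ) * (1 + Real.log m) := by ring
    linarith
  have hlog1 : (1:ℝ) ≤ Real.log m := by
    rw [Real.le_log_iff_exp_le hmR]
    calc Real.exp 1 ≤ 2.7182818286 := Real.exp_one_lt_d9.le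
      _ ≤ 3 := by norm_num
      _ ≤ m := by exact_mod_cast (by omega : 3 ≤ m)
  have hNR : (N:ℝ) ≤ m := by exact_mod_cast hNm
  have hfinal2 : Complex.abs S ^ 2 ≤ 25 * ((m:ℝ) * Real.log m) := by
    have c1 := hstep.trans (le_of_eq hsplit)
    have c9 : (9:ℝ)*(m:ℝ) ≤ 9*((m:ℝ) * Real.log m) := by nlinarith
    nlinarith [hcount, hksum, c1, hNR, hmR]
  have habsnn : 0 ≤ Complex.abs S := AbsoluteValue.nonneg _ _
  calc Complex.abs S = Real.sqrt (Complex.abs S ^ 2) := (Real.sqrt_sq habsnn).symm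
    _ ≤ Real.sqrt (25 * ((m:ℝ) * Real.log m)) := Real.sqrt_le_sqrt hfinal2
    _ = 5 * Real.sqrt ((m:ℝ) * Real.log m) := by
        rw [show (25:ℝ)*((m:ℝ)*Real.log m) = 5^2 * ((m:ℝ)*Real.log m) by norm_num,
          Real.sqrt_mul (by positivity), Real.sqrt_sq (by norm_num)]
end
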